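/- If the targets within each node of the k-nearest-neighbor tree exploration are examined in order of a valid lower bound and children are visited in ascending order of d(s, Y), then the reported k-th nearest distance is nonincreasing over the course of the algorithm, and once d(s, Y) for the next child exceeds the current k-th nearest distance, all remaining children (in the sorted order) can be skipped without losing correctness. -/
import Mathlib


open scoped ENNReal

open Classical in
/-- The `k`-th smallest element of a multiset of distances (`∞` if there are fewer
than `k` elements): the least `r` such that at least `k` elements are `≤ r`. -/
noncomputable def kthBest (k : ℕ) (m : Multiset ℝ≥0∞) : ℝ≥0∞ :=
  sInf {r | k ≤ Multiset.card (m.filter (fun x => x ≤ r))}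

/-- In the k-nearest-neighbor tree exploration, if the children
`Y 0, …, Y (d-1)` of a node are visited in ascending order of their valid lower
bounds `bound (Y i)`, then (1) the reported `k`-th nearest distance is nonincreasing
over the course of the algorithm (the multiset of examined target distances only
grows), and (2) once the lower bound of the next child `Y i₀` reaches the current
`k`-th nearest distance, all remaining children in the sorted order can be skipped
without losing correctness: none of their targets is strictly closer than the final
`k`-th reported distance. -/
theorem stmt14 {V ι : Type*} (dist : V → ℝ≥0∞) (k d : ℕ) (Y : Fin d → ι)
    (sub : ι → Set V) (bound : ι → ℝ≥0∞)
    -- children sorted by ascending lower bound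
    (hsorted : ∀ i j : Fin d, i ≤ j → bound (Y i) ≤ bound (Y j))
    -- valid lower bounds: `bound (Y i) ≤ min_{v ∈ V(G_{Y i})} dist v`
    (hlb : ∀ i : Fin d, ∀ v ∈ sub (Y i), bound (Y i) ≤ dist v)
    -- `mcur`: distances of targets examined so far; `mfinal`: all examined distances
    (mcur mfinal : Multiset ℝ≥0∞) (hm : mcur ≤ mfinal)
    (i₀ : Fin d) (hstop : kthBest k mcur ≤ bound (Y i₀)) :
    kthBest k mfinal ≤ kthBest k mcur ∧
    ∀ j : Fin d, i₀ ≤ j → ∀ v ∈ sub (Y j), kthBest k mfinal ≤ dist v := by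
  have hmono : kthBest k mfinal ≤ kthBest k mcur := by
    classical
    apply sInf_le_sInf
    intro r hr
    exact le_trans hr (Multiset.card_le_card (Multiset.filter_le_filter _ hm))
  refine ⟨hmono, fun j hj v hv => ?_⟩
  calc kthBest k mfinal ≤ kthBest k mcur := hmono
    _ ≤ bound (Y i₀) := hstop
    _ ≤ bound (Y j) := hsorted i₀ j hj
    _ ≤ dist v := hlb j v hv
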